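/- Let R be a commutative ring and B an m×m symmetric matrix over R with m ≥ 2 and B₁₂ = B₂₁ = 1. Suppose ε := 1 - B₁₁·B₂₂ is a unit in R. Define the (m-2)×(m-2) matrix B̃ by B̃_{ij} = ε·(B_{i+2,j+2} - B_{2,i+2}·B_{1,j+2}) - (B_{1,i+2} - B_{1,1}·B_{2,i+2})·(B_{2,j+2} - B_{2,2}·B_{1,j+2}). Then B̃ is symmetric and det(B) = -ε^{-(m-3)}·det(B̃), i.e., det(B) equals a unit times det(B̃). -/

import Mathlib

open Matrix

theorem sym_reduction_step_offdiagonal {R : Type*} [CommRing R] {m : ℕ}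
    (B : Matrix (Fin (m + 2)) (Fin (m + 2)) R)
    (hB : Bᵀ = B) (h01 : B 0 1 = 1) (h10 : B 1 0 = 1)
    (hε : IsUnit (1 - B 0 0 * B 1 1))
    (Bt : Matrix (Fin m) (Fin m) R)
    (hBt : ∀ i j, Bt i j =
      (1 - B 0 0 * B 1 1) * (B i.succ.succ j.succ.succ - B 1 i.succ.succ * B 0 j.succ.succ)
        - (B 0 i.succ.succ - B 0 0 * B 1 i.succ.succ)
          * (B 1 j.succ.succ - B 1 1 * B 0 j.succ.succ)) :
    Btᵀ = Bt ∧ B.det = -(((hε.unit ^ (-((m : ℤ) - 1)) : Rˣ) : R)) * Bt.det := by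
  have hsym : ∀ i j, B j i = B i j := fun i j => congrFun (congrFun hB i) j
  constructor
  · ext i j
    rw [transpose_apply, hBt, hBt, hsym j.succ.succ i.succ.succ]
    ring
  set a := B 0 0 with ha
  set d := B 1 1 with hd
  set v := hε.unit with hv
  set u : R := ((hε.unit⁻¹ : Rˣ) : R) with hu'
  have hva : (v : R) = 1 - a * d := hε.unit_spec
  have hu : (1 - a * d) * u = 1 := by
    rw [← hva]; exact_mod_cast v.mul_inv
  -- the reindexing equivalence
  let e : Fin 2 ⊕ Fin m ≃ Fin (m + 2) :=
    finSumFinEquiv.trans (finCongr (by omega))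
  have he0 : e (Sum.inl 0) = 0 := by
    apply Fin.ext; simp [e]
  have he1 : e (Sum.inl 1) = 1 := by
    apply Fin.ext; simp [e]
  have her : ∀ j : Fin m, e (Sum.inr j) = j.succ.succ := by
    intro j; apply Fin.ext; simp [e, Fin.val_succ]
  set M := B.submatrix e e with hM
  set A := M.toBlocks₁₁ with hA
  have hA00 : A 0 0 = a := by simp [hA, toBlocks₁₁, hM, he0, ha]
  have hA01 : A 0 1 = 1 := by simp [hA, toBlocks₁₁, hM, he0, he1, h01]
  have hA10 : A 1 0 = 1 := by simp [hA, toBlocks₁₁, hM, he0, he1, h10]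
  have hA11 : A 1 1 = d := by simp [hA, toBlocks₁₁, hM, he1, hd]
  let invA : Matrix (Fin 2) (Fin 2) R := !![-(u * d), u; u, -(u * a)]
  have hmul1 : invA * A = 1 := by
    ext i j
    fin_cases i <;> fin_cases j
    all_goals simp only [Matrix.mul_apply, Fin.sum_univ_two]
    all_goals simp [invA, hA00, hA01, hA10, hA11, Matrix.one_apply]
    all_goals first | ring1 | linear_combination hu
  have hmul2 : A * invA = 1 := by
    ext i j
    fin_cases i <;> fin_cases j
    all_goals simp only [Matrix.mul_apply, Fin.sum_univ_two]
    all_goals simp [invA, hA00, hA01, hA10, hA11, Matrix.one_apply]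
    all_goals first | ring1 | linear_combination hu
  letI instInv : Invertible A := ⟨invA, hmul1, hmul2⟩
  have hdetA : A.det = -(v : R) := by
    rw [det_fin_two, hA00, hA01, hA10, hA11, hva]; ring
  set S := M.toBlocks₂₂ - M.toBlocks₂₁ * ⅟A * M.toBlocks₁₂ with hS
  have hdetB : B.det = -(v : R) * S.det := by
    rw [← det_submatrix_equiv_self e B, ← hM, ← fromBlocks_toBlocks M,
      det_fromBlocks₁₁, hdetA]
  have hinvA : ⅟A = invA := rfl
  have hBtS : Bt = (v : R) • S := by
    ext i j
    rw [hBt, Matrix.smul_apply, hS, hinvA, Matrix.sub_apply,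
      Matrix.mul_apply, Fin.sum_univ_two, Matrix.mul_apply, Matrix.mul_apply,
      Fin.sum_univ_two, Fin.sum_univ_two]
    simp only [toBlocks₂₂, toBlocks₂₁, toBlocks₁₂, hM, Matrix.submatrix_apply,
      of_apply, he0, he1, her, invA, Matrix.cons_val', Matrix.cons_val_zero,
      Matrix.cons_val_one, Matrix.head_cons, Matrix.head_fin_const,
      Matrix.empty_val', Matrix.cons_val_fin_one]
    rw [hsym 0 i.succ.succ, hsym 1 i.succ.succ, hva, smul_eq_mul]
    linear_combination (B 0 i.succ.succ * (B 1 j.succ.succ - d * B 0 j.succ.succ)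
      + B 1 i.succ.succ * (B 0 j.succ.succ - a * B 1 j.succ.succ)) * hu
  have hdetBt : Bt.det = (v : R) ^ m * S.det := by
    rw [hBtS, det_smul]; simp
  have key : ((v ^ (-((m : ℤ) - 1)) : Rˣ) : R) * (v : R) ^ m = (v : R) := by
    have h : v ^ (-((m : ℤ) - 1)) * v ^ (m : ℤ) = v := by
      rw [← _root_.zpow_add]; norm_num
    calc ((v ^ (-((m : ℤ) - 1)) : Rˣ) : R) * (v : R) ^ m
        = ((v ^ (-((m : ℤ) - 1)) * v ^ (m : ℤ) : Rˣ) : R) := by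
          push_cast [zpow_natCast]; ring
      _ = (v : R) := by rw [h]
  rw [hdetB, hdetBt]
  linear_combination S.det * key
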